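/- Let p be a prime with p ≡ 3 (mod 4) and let ℓ be any prime with ℓ ≠ p. Then the quaternion algebra ℍ[ℚ_ℓ, −1, −p] splits: there exists an isomorphism of ℚ_ℓ-algebras ℍ[ℚ_ℓ, −1, −p] ≅ M₂(ℚ_ℓ). (That is, the quaternion ℚ-algebra Q(−1, −p | ℚ) is unramified at every finite place other than p.) -/

import Mathlib

open Quaternion

theorem quat_split_of_sol {F : Type*} [Field F] (a b c d : F) (ha : a ≠ 0) (hb : b ≠ 0)
    (h2 : (2:F) ≠ 0) (hcd : c^2 - a*d^2 = b) :
    Nonempty (ℍ[F, a, b] ≃ₐ[F] Matrix (Fin 2) (Fin 2) F) := by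
  classical
  subst hcd
  set I : Matrix (Fin 2) (Fin 2) F := !![0, a; 1, 0] with hI
  set J : Matrix (Fin 2) (Fin 2) F := !![c, -(a*d); d, -c] with hJ
  have hii : I * I = a • (1 : Matrix (Fin 2) (Fin 2) F) := by
    ext i j
    fin_cases i <;> fin_cases j <;>
      simp [hI, Matrix.mul_apply, Fin.sum_univ_succ, Matrix.one_apply] <;> ring
  have hjj : J * J = (c^2 - a*d^2) • (1 : Matrix (Fin 2) (Fin 2) F) := by
    ext i j
    fin_cases i <;> fin_cases j <;>
      simp [hJ, Matrix.mul_apply, Fin.sum_univ_succ, Matrix.one_apply] <;> ring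
  have hK : I * J = !![a*d, -(a*c); c, -(a*d)] := by
    ext i j
    fin_cases i <;> fin_cases j <;>
      simp [hI, hJ, Matrix.mul_apply, Fin.sum_univ_succ] <;> ring
  have hji : J * I = -(I * J) := by
    rw [hK]
    ext i j
    fin_cases i <;> fin_cases j <;>
      simp [hI, hJ, Matrix.mul_apply, Fin.sum_univ_succ] <;> ring
  let B : QuaternionAlgebra.Basis (Matrix (Fin 2) (Fin 2) F) a 0 (c^2 - a*d^2) :=
    { i := I, j := J, k := I * J
      i_mul_i := by rw [hii, zero_smul, add_zero], j_mul_j := hjj, i_mul_j := rfl, j_mul_i := by rw [hji, zero_smul, zero_sub] }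
  let φ : ℍ[F, a, c^2 - a*d^2] →ₐ[F] Matrix (Fin 2) (Fin 2) F := B.liftHom
  have hinj : Function.Injective φ := by
    rw [injective_iff_map_eq_zero]
    intro q hq
    have hφ : φ q = algebraMap F _ q.re + q.imI • I + q.imJ • J + q.imK • (I*J) := rfl
    rw [hφ] at hq
    rw [hK] at hq
    have e00 := congrFun (congrFun hq 0) 0
    have e01 := congrFun (congrFun hq 0) 1
    have e10 := congrFun (congrFun hq 1) 0
    have e11 := congrFun (congrFun hq 1) 1
    simp [hI, hJ, Matrix.algebraMap_eq_diagonal] at e00 e01 e10 e11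
    set w := q.re; set x := q.imI; set y := q.imJ; set z := q.imK
    have hw : w = 0 := by
      apply mul_left_cancel₀ h2; linear_combination e00 + e11
    have hx : x = 0 := by
      have hax : a * (2 * x) = 0 := by linear_combination e01 + a * e10
      rcases mul_eq_zero.mp hax with h | h
      · exact absurd h ha
      · exact (mul_eq_zero.mp h).resolve_left h2
    rw [hw] at e00
    rw [hx] at e10
    have hyb : y * (c^2 - a*d^2) = 0 := by
      linear_combination c * e00 - (a*d) * e10
    have hzb : z * (c^2 - a*d^2) = 0 := by
      linear_combination c * e10 - d * e00
    have hy : y = 0 := by rcases mul_eq_zero.mp hyb with h | h; exact h; exact absurd h hb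
    have hz : z = 0 := by rcases mul_eq_zero.mp hzb with h | h; exact h; exact absurd h hb
    ext <;> assumption
  have hsurj : Function.Surjective φ := by
    have hfr : Module.finrank F ℍ[F, a, c^2 - a*d^2] = Module.finrank F (Matrix (Fin 2) (Fin 2) F) := by
      rw [QuaternionAlgebra.finrank_eq_four, Module.finrank_matrix]
      simp
    exact (LinearMap.injective_iff_surjective_of_finrank_eq_finrank (f := φ.toLinearMap) hfr).mp hinj
  exact ⟨AlgEquiv.ofBijective φ ⟨hinj, hsurj⟩⟩

theorem exists_sol (p : ℕ) (hp : p.Prime) (h : p % 4 = 3)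
    (ℓ : ℕ) [hF : Fact ℓ.Prime] (hℓ : ℓ ≠ p) :
    ∃ c d : ℚ_[ℓ], c^2 + d^2 = -(p : ℚ_[ℓ]) := by
  suffices hs : ∃ c₀ d₀ : ℤ, ‖((c₀^2 + d₀^2 + p : ℤ) : ℤ_[ℓ])‖ < ‖((2*c₀ : ℤ) : ℤ_[ℓ])‖^2 by
    obtain ⟨c₀, d₀, hnorm⟩ := hs
    set F : Polynomial ℤ_[ℓ] := Polynomial.X^2 + Polynomial.C ((d₀:ℤ_[ℓ])^2 + (p:ℤ_[ℓ])) with hFdef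
    have heval : ∀ x : ℤ_[ℓ], F.eval x = x^2 + ((d₀:ℤ_[ℓ])^2 + (p:ℤ_[ℓ])) := by
      intro x; simp [hFdef]
    have hderiv : F.derivative = Polynomial.C 2 * Polynomial.X := by
      simp only [hFdef, Polynomial.derivative_add, Polynomial.derivative_C,
        Polynomial.derivative_X_pow, add_zero]
      norm_num
    have hn : ‖F.eval ((c₀:ℤ_[ℓ]))‖ < ‖F.derivative.eval ((c₀:ℤ_[ℓ]))‖^2 := by
      rw [heval, hderiv]
      have e1 : ((c₀:ℤ_[ℓ]))^2 + ((d₀:ℤ_[ℓ])^2 + (p:ℤ_[ℓ])) = ((c₀^2 + d₀^2 + p : ℤ) : ℤ_[ℓ]) := by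
        push_cast; ring
      have e2 : (Polynomial.C 2 * Polynomial.X : Polynomial ℤ_[ℓ]).eval (c₀:ℤ_[ℓ])
          = ((2*c₀ : ℤ) : ℤ_[ℓ]) := by push_cast; simp
      rw [e1, e2]; exact hnorm
    obtain ⟨z, hz, -⟩ := hensels_lemma hn
    refine ⟨(z : ℚ_[ℓ]), (d₀ : ℚ_[ℓ]), ?_⟩
    rw [Polynomial.coe_aeval_eq_eval, heval] at hz
    have := congrArg (fun t : ℤ_[ℓ] => (t : ℚ_[ℓ])) hz
    push_cast at this
    linear_combination this
  rcases eq_or_ne ℓ 2 with rfl | hodd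
  · -- ℓ = 2
    have hp8 : p % 8 = 3 ∨ p % 8 = 7 := by omega
    refine ⟨1, if p % 8 = 3 then 2 else 0, ?_⟩
    have h2 : ‖((2*1 : ℤ) : ℤ_[2])‖ = 2⁻¹ := by
      norm_num
      simpa using @PadicInt.norm_p 2 _
    have hdvd : (2^3 : ℤ) ∣ (1^2 + (if p % 8 = 3 then 2 else 0)^2 + p : ℤ) := by
      rcases hp8 with h8 | h8 <;> simp [h8] <;> omega
    have hle : ‖((1^2 + (if p % 8 = 3 then (2:ℤ) else 0)^2 + p : ℤ) : ℤ_[2])‖ ≤ (2:ℝ)^(-(3:ℕ):ℤ) := by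
      rw [show ((2:ℝ)) = ((2:ℕ):ℝ) by norm_num]
      exact PadicInt.norm_int_le_pow_iff_dvd.mpr (by exact_mod_cast hdvd)
    rw [h2]
    calc ‖((1^2 + (if p % 8 = 3 then (2:ℤ) else 0)^2 + p : ℤ) : ℤ_[2])‖
        ≤ (2:ℝ)^(-(3:ℕ):ℤ) := hle
      _ < (2⁻¹)^2 := by norm_num
  · -- ℓ odd
    obtain ⟨α, β, hab⟩ := ZMod.sq_add_sq ℓ (-(p : ZMod ℓ))
    have hnz : ¬(α = 0 ∧ β = 0) := by
      rintro ⟨rfl, rfl⟩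
      simp at hab
      rw [ZMod.natCast_eq_zero_iff] at hab
      exact hℓ ((Nat.prime_dvd_prime_iff_eq hF.out hp).mp hab)
    -- wlog α ≠ 0
    obtain ⟨α, β, hab, hα⟩ : ∃ α β : ZMod ℓ, α^2 + β^2 = -(p:ZMod ℓ) ∧ α ≠ 0 := by
      rcases eq_or_ne α 0 with rfl | hα
      · exact ⟨β, 0, by rw [← hab]; ring, fun hβ => hnz ⟨rfl, hβ⟩⟩
      · exact ⟨α, β, hab, hα⟩
    refine ⟨(α.val : ℤ), (β.val : ℤ), ?_⟩
    have hlt : ‖(((α.val:ℤ)^2 + (β.val:ℤ)^2 + p : ℤ) : ℤ_[ℓ])‖ < 1 := by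
      rw [PadicInt.norm_int_lt_one_iff_dvd]
      rw [← ZMod.intCast_zmod_eq_zero_iff_dvd]
      push_cast
      simp only [ZMod.natCast_val, ZMod.intCast_cast, ZMod.cast_id]
      linear_combination hab
    have hone : ‖((2*(α.val:ℤ) : ℤ) : ℤ_[ℓ])‖ = 1 := by
      refine le_antisymm (PadicInt.norm_le_one _) (not_lt.mp ?_)
      rw [PadicInt.norm_int_lt_one_iff_dvd]
      intro hdvd
      rcases (Int.Prime.dvd_mul' (by exact_mod_cast hF.out) hdvd) with h' | h'
      · have hl2 : ℓ ∣ 2 := by exact_mod_cast h'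
        exact hodd ((Nat.prime_dvd_prime_iff_eq hF.out Nat.prime_two).mp hl2)
      · have hv : ℓ ∣ α.val := by exact_mod_cast h'
        have hvne : α.val ≠ 0 := fun h0 => hα ((ZMod.val_eq_zero α).mp h0)
        have h1 := Nat.le_of_dvd (Nat.pos_of_ne_zero hvne) hv
        have h2 := ZMod.val_lt α
        omega
    rw [hone]; simpa using hlt

/-- Let `p` be a prime with `p ≡ 3 (mod 4)` and let `ℓ ≠ p` be any prime. Then the
quaternion algebra `ℍ[ℚ_ℓ, −1, −p]` splits: `ℍ[ℚ_ℓ, −1, −p] ≅ M₂(ℚ_ℓ)` as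
`ℚ_ℓ`-algebras. -/
theorem quaternionAlgebra_padic_neg_one_neg_p_splits (p : ℕ) (hp : p.Prime)
    (h : p % 4 = 3) (ℓ : ℕ) [Fact ℓ.Prime] (hℓ : ℓ ≠ p) :
    Nonempty (ℍ[ℚ_[ℓ], -1, -(p : ℚ_[ℓ])] ≃ₐ[ℚ_[ℓ]] Matrix (Fin 2) (Fin 2) ℚ_[ℓ]) := by
  obtain ⟨c, d, hcd⟩ := exists_sol p hp h ℓ hℓ
  have hp0 : (p : ℚ_[ℓ]) ≠ 0 := Nat.cast_ne_zero.mpr hp.ne_zero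
  exact quat_split_of_sol (-1) (-(p : ℚ_[ℓ])) c d (by norm_num) (by simpa using hp0)
    (by norm_num) (by linear_combination hcd)
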